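/- If s ∈ (0,1) satisfies 2·arccos(1 - 2/(1+s)²) + 2·arccos(s/(1+s)) + π/3 = 2π (corona 11sss: two unit discs and three s-discs around a disc of radius s, with angle vector (1,0,2,0,0,2) giving ∠1s1 + 2∠1ss + 2∠sss = 2π where ∠sss = π/3), then 9s⁴ - 12s³ - 26s² - 12s + 9 = 0. -/

import Mathlib

open Real

theorem corona_11sss (s : ℝ) (hs : s ∈ Set.Ioo (0:ℝ) 1)
    (h : Real.arccos (1 - 2/(1+s)^2) + 2 * Real.arccos (s/(1+s)) + 2 * (π/3) = 2 * π) :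
    9*s^4 - 12*s^3 - 26*s^2 - 12*s + 9 = 0 := by
  obtain ⟨hs0, hs1⟩ := hs
  have h1 : (0:ℝ) < 1 + s := by linarith
  have hx1 : (-1:ℝ) ≤ 1 - 2/(1+s)^2 := by
    have : 2/(1+s)^2 ≤ 2 := by
      rw [div_le_iff₀ (by positivity)]
      nlinarith
    linarith
  have hx2 : 1 - 2/(1+s)^2 ≤ 1 := by
    have : 0 < 2/(1+s)^2 := by positivity
    linarith
  have hc0 : (-1:ℝ) ≤ s/(1+s) := by
    have : (0:ℝ) ≤ s/(1+s) := by positivity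
    linarith
  have hc1 : s/(1+s) ≤ 1 := by
    rw [div_le_one h1]; linarith
  have key : 1 - 2/(1+s)^2 = Real.cos (4*π/3 - 2*Real.arccos (s/(1+s))) := by
    rw [← Real.cos_arccos hx1 hx2]
    congr 1
    linarith
  have hcos43 : Real.cos (4*π/3) = -(1/2) := by
    rw [show 4*π/3 = π + π/3 by ring]
    simp [Real.cos_add, Real.cos_pi_div_three]
  have hsin43 : Real.sin (4*π/3) = -(Real.sqrt 3/2) := by
    rw [show 4*π/3 = π + π/3 by ring]
    simp [Real.sin_add, Real.sin_pi_div_three]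
  rw [Real.cos_sub, Real.cos_two_mul, Real.sin_two_mul, Real.cos_arccos hc0 hc1,
    Real.sin_arccos, hcos43, hsin43] at key
  have h12 : 1 - (s/(1+s))^2 = (Real.sqrt (1+2*s)/(1+s))^2 := by
    rw [eq_comm, div_pow, Real.sq_sqrt (show (0:ℝ) ≤ 1+2*s by linarith)]
    field_simp
    ring
  rw [h12, Real.sqrt_sq (by positivity)] at key
  set u := Real.sqrt (1+2*s) with hu
  have hu2 : u^2 = 1+2*s := Real.sq_sqrt (by linarith)
  set v := Real.sqrt 3 with hv
  have hv2 : v^2 = 3 := Real.sq_sqrt (by norm_num)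
  -- key : 1 - 2/(1+s)^2 = -(1/2) * (2*(s/(1+s))^2 - 1) + -(v/2) * (2*(u/(1+s))*(s/(1+s)))
  have E : 3*s^2 + 2*s - 3 = -(2 * v * s * u) := by
    field_simp at key
    have hne : (2*(1+s)^4 : ℝ) ≠ 0 := by positivity
    apply mul_right_cancel₀ hne
    linear_combination (2*(1+s)^4) * key
  have E2 : (3*s^2 + 2*s - 3)^2 = 4 * 3 * (1+2*s) * s^2 := by
    rw [E]; rw [show (-(2*v*s*u))^2 = 4 * v^2 * s^2 * u^2 by ring, hv2, hu2]; ring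
  nlinarith [E2]
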